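/- Let G be a graph and define the transformed graph G' as follows: V(G') = V1 ∪ V2 where V1 and V2 are two disjoint copies of V(G); a vertex v1 ∈ V1 is adjacent in G' to every u2 ∈ V2 with u in the closed neighbourhood of v in G; a vertex v2 ∈ V2 is adjacent to every u2 ∈ V2 with u at distance exactly 1 or 2 from v in G; and V1 is an independent set. Then for every graph G with no isolated vertex, the semitotal domination number of G equals the total domination number of G'. -/
import Mathlib

open SimpleGraph

/-- `D` is a dominating set of `G`. -/
def IsDomSet {V : Type*} [DecidableEq V] (G : SimpleGraph V) (D : Finset V) : Prop :=
  ∀ v, v ∉ D → ∃ u ∈ D, G.Adj u v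

/-- `D` is a total dominating set of `G`. -/
def IsTotDomSet {V : Type*} [DecidableEq V] (G : SimpleGraph V) (D : Finset V) : Prop :=
  ∀ v : V, ∃ u ∈ D, G.Adj u v

/-- `u` and `v` are distinct and within distance at most 2 in `G`. -/
def WithinTwo {V : Type*} (G : SimpleGraph V) (u v : V) : Prop :=
  G.Adj u v ∨ ∃ w, G.Adj u w ∧ G.Adj w v

/-- `D` is a semitotal dominating set of `G`. -/
def IsSemiTDSet {V : Type*} [DecidableEq V] (G : SimpleGraph V) (D : Finset V) : Prop :=
  IsDomSet G D ∧ ∀ v ∈ D, ∃ u ∈ D, u ≠ v ∧ WithinTwo G u v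

/-- The domination number of `G`. -/
noncomputable def gamma {V : Type*} [Fintype V] [DecidableEq V] (G : SimpleGraph V) : ℕ :=
  sInf {n | ∃ D : Finset V, IsDomSet G D ∧ D.card = n}

/-- The total domination number of `G`. -/
noncomputable def gammaT {V : Type*} [Fintype V] [DecidableEq V] (G : SimpleGraph V) : ℕ :=
  sInf {n | ∃ D : Finset V, IsTotDomSet G D ∧ D.card = n}

/-- The semitotal domination number of `G`. -/
noncomputable def gammaT2 {V : Type*} [Fintype V] [DecidableEq V] (G : SimpleGraph V) : ℕ :=
  sInf {n | ∃ D : Finset V, IsSemiTDSet G D ∧ D.card = n}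

/-- The transformed graph `G'` on `V ⊕ V`: every `v₁` in the first copy is adjacent to
the second-copy vertices `u₂` with `u ∈ N_G[v]`; two second-copy vertices are adjacent
iff the corresponding vertices are at distance 1 or 2 in `G`; the first copy is independent. -/
def transform {V : Type*} (G : SimpleGraph V) : SimpleGraph (V ⊕ V) :=
  SimpleGraph.fromRel (fun a b =>
    match a, b with
    | Sum.inl v, Sum.inr u => u = v ∨ G.Adj v u
    | Sum.inr v, Sum.inr u => G.Adj v u ∨ ∃ w, G.Adj v w ∧ G.Adj w u
    | _, _ => False)

lemma adj_inl_inr {V : Type*} {G : SimpleGraph V} {v u : V} :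
    (transform G).Adj (Sum.inl v) (Sum.inr u) ↔ (u = v ∨ G.Adj v u) := by
  simp [transform, SimpleGraph.fromRel_adj]

lemma not_adj_inl_inl {V : Type*} {G : SimpleGraph V} {v u : V} :
    ¬ (transform G).Adj (Sum.inl v) (Sum.inl u) := by
  simp [transform, SimpleGraph.fromRel_adj]

lemma adj_inr_inr {V : Type*} {G : SimpleGraph V} {v u : V} :
    (transform G).Adj (Sum.inr v) (Sum.inr u) ↔ (v ≠ u ∧ WithinTwo G v u) := by
  simp only [transform, SimpleGraph.fromRel_adj, WithinTwo, ne_eq, Sum.inr.injEq]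
  constructor
  · rintro ⟨h, (h' | h') | (h' | ⟨w, h1, h2⟩)⟩
    · exact ⟨h, Or.inl h'⟩
    · exact ⟨h, Or.inr h'⟩
    · exact ⟨h, Or.inl h'.symm⟩
    · exact ⟨h, Or.inr ⟨w, h2.symm, h1.symm⟩⟩
  · rintro ⟨h, h'⟩
    exact ⟨h, Or.inl h'⟩

theorem semitotal_eq_total_transform {V : Type*} [Fintype V] [DecidableEq V]
    (G : SimpleGraph V) (hiso : ∀ v : V, ∃ u, G.Adj v u) :
    gammaT2 G = gammaT (transform G) := by
  classical
  choose nb hnb using hiso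
  -- Nonemptiness of the defining sets
  have hS2ne : {n | ∃ D : Finset V, IsSemiTDSet G D ∧ D.card = n}.Nonempty := by
    refine ⟨(Finset.univ : Finset V).card, Finset.univ, ⟨?_, ?_⟩, rfl⟩
    · intro v hv; exact absurd (Finset.mem_univ v) hv
    · intro v _
      exact ⟨nb v, Finset.mem_univ _, (hnb v).ne', Or.inl (hnb v).symm⟩
  have hSTne : {n | ∃ D : Finset (V ⊕ V), IsTotDomSet (transform G) D ∧ D.card = n}.Nonempty := by
    refine ⟨(Finset.univ : Finset (V ⊕ V)).card, Finset.univ, ?_, rfl⟩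
    intro x
    cases x with
    | inl v =>
      refine ⟨Sum.inr v, Finset.mem_univ _, ?_⟩
      exact (adj_inl_inr.mpr (Or.inl rfl)).symm
    | inr v =>
      exact ⟨Sum.inl v, Finset.mem_univ _, adj_inl_inr.mpr (Or.inl rfl)⟩
  apply le_antisymm
  · -- gammaT2 ≤ gammaT (transform G)
    obtain ⟨D', hD', hcard⟩ := Nat.sInf_mem hSTne
    set L : Finset V := Finset.univ.filter (fun v => Sum.inl v ∈ D') with hL
    set R : Finset V := Finset.univ.filter (fun v => Sum.inr v ∈ D') with hR
    have hmemL : ∀ v, v ∈ L ↔ Sum.inl v ∈ D' := by intro v; simp [hL]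
    have hmemR : ∀ v, v ∈ R ↔ Sum.inr v ∈ D' := by intro v; simp [hR]
    have hDeq : D' = L.image Sum.inl ∪ R.image Sum.inr := by
      ext x
      cases x with
      | inl v => simp [hmemL v]
      | inr v => simp [hmemR v]
    have hcard' : D'.card = L.card + R.card := by
      have hdisj : Disjoint (L.image Sum.inl) (R.image Sum.inr) := by
        simp [Finset.disjoint_left]
      rw [hDeq, Finset.card_union_of_disjoint hdisj,
        Finset.card_image_of_injective _ Sum.inl_injective,
        Finset.card_image_of_injective _ Sum.inr_injective]
    set D : Finset V := (L ∪ R) ∪ (L ∩ R).image nb with hD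
    have hcardD : D.card ≤ D'.card := by
      calc D.card ≤ (L ∪ R).card + ((L ∩ R).image nb).card := Finset.card_union_le _ _
        _ ≤ (L ∪ R).card + (L ∩ R).card :=
            Nat.add_le_add_left Finset.card_image_le _
        _ = L.card + R.card := Finset.card_union_add_card_inter L R
        _ = D'.card := hcard'.symm
    have hsub : L ∪ R ⊆ D := Finset.subset_union_left
    have hsemi : IsSemiTDSet G D := by
      constructor
      · -- dominating
        intro v hv
        obtain ⟨x, hx, hadj⟩ := hD' (Sum.inl v)
        cases x with
        | inl w => exact absurd hadj not_adj_inl_inl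
        | inr w =>
          rcases adj_inl_inr.mp hadj.symm with h | h
          · exfalso
            rw [h] at hx
            exact hv (hsub (Finset.mem_union_right _ ((hmemR v).mpr hx)))
          · refine ⟨w, hsub (Finset.mem_union_right _ ((hmemR w).mpr hx)), h.symm⟩
      · -- semitotal condition
        intro v hv
        rcases Finset.mem_union.mp hv with hvA | hvN
        · by_cases hvB : v ∈ L ∩ R
          · refine ⟨nb v, Finset.mem_union_right _ (Finset.mem_image_of_mem nb hvB),
              (hnb v).ne', Or.inl (hnb v).symm⟩
          · obtain ⟨x, hx, hadj⟩ := hD' (Sum.inl v)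
            cases x with
            | inl w => exact absurd hadj not_adj_inl_inl
            | inr w =>
              rcases adj_inl_inr.mp hadj.symm with h | h
              · -- w = v, so inr v ∈ D' and inl v ∉ D'
                rw [h] at hx
                have hvR : v ∈ R := (hmemR v).mpr hx
                have hvL : v ∉ L := fun h => hvB (Finset.mem_inter.mpr ⟨h, hvR⟩)
                obtain ⟨y, hy, hadj'⟩ := hD' (Sum.inr v)
                cases y with
                | inl w' =>
                  rcases adj_inl_inr.mp hadj' with h' | h'
                  · exact absurd ((hmemL w').mpr hy) (h' ▸ hvL)
                  · exact ⟨w', hsub (Finset.mem_union_left _ ((hmemL w').mpr hy)),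
                      h'.ne, Or.inl h'⟩
                | inr w' =>
                  obtain ⟨hne, hw2⟩ := adj_inr_inr.mp hadj'
                  exact ⟨w', hsub (Finset.mem_union_right _ ((hmemR w').mpr hy)), hne, hw2⟩
              · exact ⟨w, hsub (Finset.mem_union_right _ ((hmemR w).mpr hx)), h.ne',
                  Or.inl h.symm⟩
        · obtain ⟨b, hb, rfl⟩ := Finset.mem_image.mp hvN
          have hbA : b ∈ D := hsub (Finset.mem_union_left _ (Finset.mem_inter.mp hb).1)
          exact ⟨b, hbA, (hnb b).ne, Or.inl (hnb b)⟩
    calc gammaT2 G ≤ D.card := Nat.sInf_le ⟨D, hsemi, rfl⟩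
      _ ≤ D'.card := hcardD
      _ = gammaT (transform G) := hcard
  · -- gammaT (transform G) ≤ gammaT2 G
    obtain ⟨D, ⟨hdom, hsemi⟩, hcard⟩ := Nat.sInf_mem hS2ne
    refine Nat.sInf_le ⟨D.image Sum.inr, ?_, by
      rw [Finset.card_image_of_injective _ Sum.inr_injective, hcard]; rfl⟩
    intro x
    cases x with
    | inl v =>
      by_cases hv : v ∈ D
      · exact ⟨Sum.inr v, Finset.mem_image_of_mem _ hv,
          (adj_inl_inr.mpr (Or.inl rfl)).symm⟩
      · obtain ⟨u, hu, hadj⟩ := hdom v hv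
        exact ⟨Sum.inr u, Finset.mem_image_of_mem _ hu,
          (adj_inl_inr.mpr (Or.inr hadj.symm)).symm⟩
    | inr v =>
      by_cases hv : v ∈ D
      · obtain ⟨u, hu, hne, hw2⟩ := hsemi v hv
        exact ⟨Sum.inr u, Finset.mem_image_of_mem _ hu, adj_inr_inr.mpr ⟨hne, hw2⟩⟩
      · obtain ⟨u, hu, hadj⟩ := hdom v hv
        exact ⟨Sum.inr u, Finset.mem_image_of_mem _ hu,
          adj_inr_inr.mpr ⟨hadj.ne, Or.inl hadj⟩⟩
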